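/- The strata Π_n and Σ_n are disjoint for n ≥ 1, and the Π-strata (respectively Σ-strata) separate conversion classes: if M ∈ Π_i, N ∈ Π_j, and M ≃ N, then i = j; similarly for Σ_i and Σ_j. -/

import Mathlib

namespace ECC

/-- Terms of Luo's Extended Calculus of Constructions, in de Bruijn representation. -/
inductive Term : Type
  | var   : ℕ → Term
  | prop  : Term
  | type  : ℕ → Term
  | pi    : Term → Term → Term
  | sigma : Term → Term → Term
  | lam   : Term → Term → Term
  | app   : Term → Term → Term
  | pair  : Term → Term → Term → Term   -- ⟨M, N⟩_B with type annotation B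
  | proj1 : Term → Term
  | proj2 : Term → Term
deriving DecidableEq

/-- Lift (shift by `d`) all de Bruijn indices ≥ `k`. -/
def lift (d : ℕ) : ℕ → Term → Term
  | k, .var n       => if n < k then .var n else .var (n + d)
  | _, .prop        => .prop
  | _, .type j      => .type j
  | k, .pi A B      => .pi (lift d k A) (lift d (k+1) B)
  | k, .sigma A B   => .sigma (lift d k A) (lift d (k+1) B)
  | k, .lam A M     => .lam (lift d k A) (lift d (k+1) M)
  | k, .app M N     => .app (lift d k M) (lift d k N)
  | k, .pair M N B  => .pair (lift d k M) (lift d k N) (lift d k B)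
  | k, .proj1 M     => .proj1 (lift d k M)
  | k, .proj2 M     => .proj2 (lift d k M)

/-- Capture-avoiding substitution `[N/x]A` of the term `N` for the variable `x` in `A`. -/
def subst (N : Term) : ℕ → Term → Term
  | k, .var n       => if n < k then .var n else if n = k then lift k 0 N else .var (n - 1)
  | _, .prop        => .prop
  | _, .type j      => .type j
  | k, .pi A B      => .pi (subst N k A) (subst N (k+1) B)
  | k, .sigma A B   => .sigma (subst N k A) (subst N (k+1) B)
  | k, .lam A M     => .lam (subst N k A) (subst N (k+1) M)
  | k, .app M M'    => .app (subst N k M) (subst N k M')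
  | k, .pair M M' B => .pair (subst N k M) (subst N k M') (subst N k B)
  | k, .proj1 M     => .proj1 (subst N k M)
  | k, .proj2 M     => .proj2 (subst N k M)

/-- `[N/x₀]B` : substitution for the outermost bound variable. -/
def subst0 (B N : Term) : Term := subst N 0 B

/-- One-step reduction (β together with the projection reductions, closed under all
term-formation congruences). -/
inductive Red : Term → Term → Prop
  | beta    : Red (.app (.lam A M) N) (subst0 M N)
  | pr1     : Red (.proj1 (.pair M N B)) M
  | pr2     : Red (.proj2 (.pair M N B)) N
  | piL     : Red A A' → Red (.pi A B) (.pi A' B)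
  | piR     : Red B B' → Red (.pi A B) (.pi A B')
  | sigmaL  : Red A A' → Red (.sigma A B) (.sigma A' B)
  | sigmaR  : Red B B' → Red (.sigma A B) (.sigma A B')
  | lamL    : Red A A' → Red (.lam A M) (.lam A' M)
  | lamR    : Red M M' → Red (.lam A M) (.lam A M')
  | appL    : Red M M' → Red (.app M N) (.app M' N)
  | appR    : Red N N' → Red (.app M N) (.app M N')
  | pairL   : Red M M' → Red (.pair M N B) (.pair M' N B)
  | pairR   : Red N N' → Red (.pair M N B) (.pair M N' B)
  | pairB   : Red B B' → Red (.pair M N B) (.pair M N B')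
  | proj1C  : Red M M' → Red (.proj1 M) (.proj1 M')
  | proj2C  : Red M M' → Red (.proj2 M) (.proj2 M')

/-- Conversion `≃` : the equivalence relation generated by reduction. -/
def Conv : Term → Term → Prop := Relation.EqvGen Red

/-- `A` has a normal form. -/
def HasNF (A : Term) : Prop :=
  ∃ B, Relation.ReflTransGen Red A B ∧ ∀ C, ¬ Red B C

/-- `𝒯` : the set of normalisable terms. -/
def Tset : Set Term := {A | HasNF A}

/-- Universes are `Prop` and the `Type_j`. -/
def IsUniv (T : Term) : Prop := T = .prop ∨ ∃ j, T = .type j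

/-- The cumulativity relation `⪯` : the smallest preorder containing conversion,
the universe order, congruence for Π in the codomain, and congruence for Σ in both
components. -/
inductive Cum : Term → Term → Prop
  | conv     : Conv A B → Cum A B
  | propType : Cum .prop (.type 0)
  | typeType : j ≤ k → Cum (.type j) (.type k)
  | pi       : Conv A A' → Cum B B' → Cum (.pi A B) (.pi A' B')
  | sigma    : Cum A A' → Cum B B' → Cum (.sigma A B) (.sigma A' B')
  | trans    : Cum A B → Cum B C → Cum A C

/-- The strict cumulativity relation `≺` : `A ⪯ B` and `A ≄ B`. -/
def SCum (A B : Term) : Prop := Cum A B ∧ ¬ Conv A B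

/-- The stratified cumulativity relations `⪯ᵢ`. -/
inductive CumL : ℕ → Term → Term → Prop
  | conv     : Conv A B → CumL i A B
  | propType : CumL i .prop (.type j)
  | typeType : j < k → CumL i (.type j) (.type k)
  | succ     : CumL i A B → CumL (i+1) A B
  | pi       : Conv M (.pi A B) → Conv N (.pi A' B') → Conv A A' → CumL i B B' →
               CumL (i+1) M N
  | sigma    : Conv M (.sigma A B) → Conv N (.sigma A' B') → CumL i A A' → CumL i B B' →
               CumL (i+1) M N

/-- Strict stratified cumulativity `≺ᵢ`. -/
def SCumL (i : ℕ) (A B : Term) : Prop := CumL i A B ∧ ¬ Conv A B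

/-- Is the outermost symbol of a term Π or Σ? -/
def BinderHeaded : Term → Prop
  | .pi _ _    => True
  | .sigma _ _ => True
  | _          => False

/-- The base stratum: normalisable terms not convertible to a binder-headed
normalisable term. -/
def Base : Set Term :=
  {T | HasNF T ∧ ¬ ∃ B, HasNF B ∧ BinderHeaded B ∧ Conv T B}

/-- The stratification `(Π_n, Σ_n)` of `𝒯`. -/
def Strata : ℕ → Set Term × Set Term
  | 0 => (Base, Base)
  | n+1 =>
    ({T | ∃ k l, ∃ _ : k + l = n, ∃ A B, HasNF (Term.pi A B) ∧ Conv T (Term.pi A B) ∧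
        A ∈ (Strata k).1 ∪ (Strata k).2 ∧ B ∈ (Strata l).1 ∪ (Strata l).2},
     {T | ∃ k l, ∃ _ : k + l = n, ∃ A B, HasNF (Term.sigma A B) ∧ Conv T (Term.sigma A B) ∧
        A ∈ (Strata k).1 ∪ (Strata k).2 ∧ B ∈ (Strata l).1 ∪ (Strata l).2})
termination_by n => n
decreasing_by all_goals omega

/-- The stratum `Π_n`. -/
def PiStr (n : ℕ) : Set Term := (Strata n).1

/-- The stratum `Σ_n`. -/
def SigStr (n : ℕ) : Set Term := (Strata n).2

/-- The specification of the rank function `φ : 𝒯 → ω`. -/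
def PhiSpec (φ : Term → ℕ) : Prop :=
  (∀ M N, HasNF M → HasNF N → Conv M N → φ M = φ N) ∧
  (∀ T, HasNF T → Conv T .prop → φ T = 2) ∧
  (∀ T j, HasNF T → Conv T (.type j) → φ T = 3 + j) ∧
  (∀ T, T ∈ PiStr 0 → ¬ Conv T .prop → (∀ j, ¬ Conv T (.type j)) → φ T = 1) ∧
  (∀ T A B, HasNF T → (Conv T (.pi A B) ∨ Conv T (.sigma A B)) → φ T = φ A * φ B) ∧
  (∀ T, HasNF T → 0 < φ T)

mutual
/-- Valid contexts of ECC (de Bruijn: the head of the list is the most recent entry). -/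
inductive Valid : List Term → Prop
  | nil  : Valid []
  | cons : Typing Γ A (.type j) → Valid (A :: Γ)

/-- The typing judgement `Γ ⊢ M : A` of ECC. -/
inductive Typing : List Term → Term → Term → Prop
  | prop  : Valid Γ → Typing Γ .prop (.type 0)
  | type  : Valid Γ → Typing Γ (.type j) (.type (j+1))
  | var   : Valid Γ → Γ[n]? = some A → Typing Γ (.var n) (lift (n+1) 0 A)
  | pi1   : Typing Γ A (.type j) → Typing (A :: Γ) B .prop →
            Typing Γ (.pi A B) .prop
  | pi2   : Typing Γ A (.type j) → Typing (A :: Γ) B (.type j) →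
            Typing Γ (.pi A B) (.type j)
  | sig   : Typing Γ A (.type j) → Typing (A :: Γ) B (.type j) →
            Typing Γ (.sigma A B) (.type j)
  | lam   : Typing (A :: Γ) M B → Typing Γ (.lam A M) (.pi A B)
  | app   : Typing Γ M (.pi A B) → Typing Γ N A → Typing Γ (.app M N) (subst0 B N)
  | pair  : Typing Γ M A → Typing Γ N (subst0 B M) → Typing (A :: Γ) B (.type j) →
            Typing Γ (.pair M N (.sigma A B)) (.sigma A B)
  | proj1 : Typing Γ M (.sigma A B) → Typing Γ (.proj1 M) A
  | proj2 : Typing Γ M (.sigma A B) → Typing Γ (.proj2 M) (subst0 B (.proj1 M))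
  | cum   : Typing Γ M A → Typing Γ B (.type j) → Cum A B → Typing Γ M B
end

/-- `Type_j` for `j ∈ ℤ`, with the convention `Type_{-1} = Prop`. -/
def TType (j : ℤ) : Term := if j < 0 then .prop else .type j.toNat

/-- The typing judgement of the restricted system `ECC⁻`: the rules
`(Π2)(Σ)(app)(pair)(⪯)` of ECC are replaced by `(Π2')(Σ')(app')(pair')` and `(≃)_ρ`. -/
inductive TypingM : List Term → Term → Term → Prop
  | prop  : Valid Γ → TypingM Γ .prop (.type 0)
  | type  : Valid Γ → TypingM Γ (.type j) (.type (j+1))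
  | var   : Valid Γ → Γ[n]? = some A → TypingM Γ (.var n) (lift (n+1) 0 A)
  | pi1   : TypingM Γ A (.type j) → TypingM (A :: Γ) B .prop →
            TypingM Γ (.pi A B) .prop
  | pi2'  : TypingM Γ A (TType j) → TypingM (A :: Γ) B (TType k) → 0 ≤ k →
            TypingM Γ (.pi A B) (TType (max (max j k) 0))
  | sig'  : TypingM Γ A (TType j) → TypingM (A :: Γ) B (TType k) →
            TypingM Γ (.sigma A B) (TType (max (max j k) 0))
  | lam   : TypingM (A :: Γ) M B → TypingM Γ (.lam A M) (.pi A B)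
  | app'  : TypingM Γ M (.pi A B) → TypingM Γ N A' → Cum A' A →
            TypingM Γ (.app M N) (subst0 B N)
  | pair' : TypingM Γ M A → TypingM Γ N C → TypingM (A' :: Γ) B' (.type j) →
            Cum A A' → Cum C (subst0 B' M) →
            TypingM Γ (.pair M N (.sigma A' B')) (.sigma A' B')
  | proj1 : TypingM Γ M (.sigma A B) → TypingM Γ (.proj1 M) A
  | proj2 : TypingM Γ M (.sigma A B) → TypingM Γ (.proj2 M) (subst0 B (.proj1 M))
  | conv  : TypingM Γ M A → Conv A A' → Typing Γ A' (.type j) → TypingM Γ M A'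

end ECC

namespace ECC

/-! ### de Bruijn index lemmas -/

theorem lift_lift_le (d d' k k' : ℕ) (h : k' ≤ k) (t : Term) :
    lift d' k' (lift d k t) = lift d (k + d') (lift d' k' t) := by
  induction t generalizing k k' with
  | var n =>
    simp only [lift]
    by_cases h1 : n < k'
    · rw [if_pos (show n < k by omega), if_pos h1, lift, if_pos h1, lift,
        if_pos (show n < k + d' by omega)]
    · by_cases h2 : n < k
      · rw [if_pos h2, if_neg h1, lift, if_neg h1, lift,
          if_pos (show n + d' < k + d' by omega)]
      · rw [if_neg h2, if_neg h1, lift, if_neg (show ¬ n + d < k' by omega), lift,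
          if_neg (show ¬ n + d' < k + d' by omega)]
        congr 1; omega
  | pi A B ihA ihB =>
    simp only [lift]; rw [ihA _ _ h, ihB (k+1) (k'+1) (by omega), Nat.add_right_comm k 1 d']
  | sigma A B ihA ihB =>
    simp only [lift]; rw [ihA _ _ h, ihB (k+1) (k'+1) (by omega), Nat.add_right_comm k 1 d']
  | lam A M ihA ihM =>
    simp only [lift]; rw [ihA _ _ h, ihM (k+1) (k'+1) (by omega), Nat.add_right_comm k 1 d']
  | app M N ihM ihN => simp only [lift]; rw [ihM _ _ h, ihN _ _ h]
  | pair M N B ihM ihN ihB => simp only [lift]; rw [ihM _ _ h, ihN _ _ h, ihB _ _ h]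
  | proj1 M ih => simp only [lift]; rw [ih _ _ h]
  | proj2 M ih => simp only [lift]; rw [ih _ _ h]
  | _ => simp only [lift]

theorem lift_lift_add (d d' k k' : ℕ) (h1 : k ≤ k') (h2 : k' ≤ k + d) (t : Term) :
    lift d' k' (lift d k t) = lift (d + d') k t := by
  induction t generalizing k k' with
  | var n =>
    simp only [lift]
    by_cases h3 : n < k
    · rw [if_pos h3, lift, if_pos (show n < k' by omega), if_pos h3]
    · rw [if_neg h3, lift, if_neg (show ¬ n + d < k' by omega), if_neg h3]
      congr 1; omega
  | pi A B ihA ihB =>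
    simp only [lift]; rw [ihA _ _ h1 h2, ihB (k+1) (k'+1) (by omega) (by omega)]
  | sigma A B ihA ihB =>
    simp only [lift]; rw [ihA _ _ h1 h2, ihB (k+1) (k'+1) (by omega) (by omega)]
  | lam A M ihA ihM =>
    simp only [lift]; rw [ihA _ _ h1 h2, ihM (k+1) (k'+1) (by omega) (by omega)]
  | app M N ihM ihN => simp only [lift]; rw [ihM _ _ h1 h2, ihN _ _ h1 h2]
  | pair M N B ihM ihN ihB =>
    simp only [lift]; rw [ihM _ _ h1 h2, ihN _ _ h1 h2, ihB _ _ h1 h2]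
  | proj1 M ih => simp only [lift]; rw [ih _ _ h1 h2]
  | proj2 M ih => simp only [lift]; rw [ih _ _ h1 h2]
  | _ => simp only [lift]

theorem lift_subst (d k k' : ℕ) (h : k' ≤ k) (N t : Term) :
    lift d k' (subst N k t) = subst N (k + d) (lift d k' t) := by
  induction t generalizing k k' with
  | var n =>
    simp only [lift, subst]
    rcases Nat.lt_trichotomy n k with h1 | h1 | h1
    · by_cases h2 : n < k'
      · rw [if_pos h1, if_pos h2, lift, if_pos h2, subst, if_pos (show n < k + d by omega)]
      · rw [if_pos h1, if_neg h2, lift, if_neg h2, subst,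
          if_pos (show n + d < k + d by omega)]
    · subst h1
      rw [if_neg (by omega), if_pos rfl, if_neg (by omega), subst, if_neg (by omega),
        if_pos rfl, lift_lift_add n d 0 k' (Nat.zero_le _) (by omega)]
    · rw [if_neg (by omega), if_neg (by omega), lift, if_neg (by omega),
        if_neg (by omega), subst, if_neg (by omega), if_neg (by omega)]
      congr 1; omega
  | pi A B ihA ihB =>
    simp only [lift, subst]
    rw [ihA _ _ h, ihB (k+1) (k'+1) (by omega), Nat.add_right_comm k 1 d]
  | sigma A B ihA ihB =>
    simp only [lift, subst]
    rw [ihA _ _ h, ihB (k+1) (k'+1) (by omega), Nat.add_right_comm k 1 d]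
  | lam A M ihA ihM =>
    simp only [lift, subst]
    rw [ihA _ _ h, ihM (k+1) (k'+1) (by omega), Nat.add_right_comm k 1 d]
  | app M N ihM ihN => simp only [lift, subst]; rw [ihM _ _ h, ihN _ _ h]
  | pair M N B ihM ihN ihB =>
    simp only [lift, subst]; rw [ihM _ _ h, ihN _ _ h, ihB _ _ h]
  | proj1 M ih => simp only [lift, subst]; rw [ih _ _ h]
  | proj2 M ih => simp only [lift, subst]; rw [ih _ _ h]
  | _ => simp only [lift, subst]

theorem subst_lift_cancel (d k j : ℕ) (h1 : k ≤ j) (h2 : j < k + d) (Q t : Term) :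
    subst Q j (lift d k t) = lift (d - 1) k t := by
  induction t generalizing k j with
  | var n =>
    simp only [lift, subst]
    by_cases h3 : n < k
    · rw [if_pos h3, subst, if_pos (show n < j by omega), if_pos h3]
    · rw [if_neg h3, subst, if_neg (show ¬ n + d < j by omega),
        if_neg (show ¬ n + d = j by omega), if_neg h3]
      congr 1; omega
  | pi A B ihA ihB =>
    simp only [lift, subst]; rw [ihA _ _ h1 h2, ihB (k+1) (j+1) (by omega) (by omega)]
  | sigma A B ihA ihB =>
    simp only [lift, subst]; rw [ihA _ _ h1 h2, ihB (k+1) (j+1) (by omega) (by omega)]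
  | lam A M ihA ihM =>
    simp only [lift, subst]; rw [ihA _ _ h1 h2, ihM (k+1) (j+1) (by omega) (by omega)]
  | app M N ihM ihN => simp only [lift, subst]; rw [ihM _ _ h1 h2, ihN _ _ h1 h2]
  | pair M N B ihM ihN ihB =>
    simp only [lift, subst]; rw [ihM _ _ h1 h2, ihN _ _ h1 h2, ihB _ _ h1 h2]
  | proj1 M ih => simp only [lift, subst]; rw [ih _ _ h1 h2]
  | proj2 M ih => simp only [lift, subst]; rw [ih _ _ h1 h2]
  | _ => simp only [lift, subst]

theorem lift_subst_high (d k j : ℕ) (N t : Term) :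
    lift d (k + j) (subst N j t) = subst (lift d k N) j (lift d (k + j + 1) t) := by
  induction t generalizing j with
  | var n =>
    simp only [lift, subst]
    rcases Nat.lt_trichotomy n j with h1 | h1 | h1
    · rw [if_pos h1, lift, if_pos (show n < k + j by omega), if_pos (show n < k + j + 1 by omega),
        subst, if_pos h1]
    · subst h1
      rw [if_neg (by omega), if_pos rfl, if_pos (by omega), subst, if_neg (by omega), if_pos rfl]
      exact (lift_lift_le d n k 0 (Nat.zero_le k) N).symm
    · rw [if_neg (by omega), if_neg (by omega), lift]
      by_cases h2 : n - 1 < k + j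
      · rw [if_pos h2, if_pos (show n < k + j + 1 by omega), subst, if_neg (by omega),
          if_neg (by omega)]
      · rw [if_neg h2, if_neg (show ¬ n < k + j + 1 by omega), subst, if_neg (by omega),
          if_neg (by omega)]
        congr 1; omega
  | pi A B ihA ihB =>
    simp only [lift, subst, Term.pi.injEq, Term.sigma.injEq, Term.lam.injEq, Term.app.injEq, Term.pair.injEq, Term.proj1.injEq, Term.proj2.injEq]
    exact ⟨ihA j, by exact ihB (j+1)⟩
  | sigma A B ihA ihB =>
    simp only [lift, subst, Term.pi.injEq, Term.sigma.injEq, Term.lam.injEq, Term.app.injEq, Term.pair.injEq, Term.proj1.injEq, Term.proj2.injEq]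
    exact ⟨ihA j, by exact ihB (j+1)⟩
  | lam A M ihA ihM =>
    simp only [lift, subst, Term.pi.injEq, Term.sigma.injEq, Term.lam.injEq, Term.app.injEq, Term.pair.injEq, Term.proj1.injEq, Term.proj2.injEq]
    exact ⟨ihA j, by exact ihM (j+1)⟩
  | app M N ihM ihN => simp only [lift, subst, Term.pi.injEq, Term.sigma.injEq, Term.lam.injEq, Term.app.injEq, Term.pair.injEq, Term.proj1.injEq, Term.proj2.injEq]; exact ⟨ihM j, ihN j⟩
  | pair M N B ihM ihN ihB => simp only [lift, subst, Term.pi.injEq, Term.sigma.injEq, Term.lam.injEq, Term.app.injEq, Term.pair.injEq, Term.proj1.injEq, Term.proj2.injEq]; exact ⟨ihM j, ihN j, ihB j⟩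
  | proj1 M ih => simp only [lift, subst, Term.pi.injEq, Term.sigma.injEq, Term.lam.injEq, Term.app.injEq, Term.pair.injEq, Term.proj1.injEq, Term.proj2.injEq]; exact ih j
  | proj2 M ih => simp only [lift, subst, Term.pi.injEq, Term.sigma.injEq, Term.lam.injEq, Term.app.injEq, Term.pair.injEq, Term.proj1.injEq, Term.proj2.injEq]; exact ih j
  | _ => simp only [lift, subst]

theorem subst_subst (k j : ℕ) (N P t : Term) :
    subst N (k + j) (subst P j t) = subst (subst N k P) j (subst N (k + j + 1) t) := by
  induction t generalizing j with
  | var n =>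
    simp only [subst]
    rcases Nat.lt_trichotomy n j with h1 | h1 | h1
    · rw [if_pos h1, subst, if_pos (show n < k + j by omega), if_pos (show n < k + j + 1 by omega),
        subst, if_pos h1]
    · subst h1
      rw [if_neg (by omega), if_pos rfl, if_pos (by omega), subst, if_neg (by omega), if_pos rfl]
      exact (lift_subst n k 0 (Nat.zero_le k) N P).symm
    · rw [if_neg (by omega), if_neg (by omega), subst]
      rcases Nat.lt_trichotomy (n-1) (k+j) with h2 | h2 | h2
      · rw [if_pos h2, if_pos (show n < k + j + 1 by omega), subst, if_neg (by omega),
          if_neg (by omega)]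
      · rw [if_neg (by omega), if_pos (by omega), if_neg (show ¬ n < k + j + 1 by omega),
          if_pos (show n = k + j + 1 by omega),
          subst_lift_cancel (k+j+1) 0 j (Nat.zero_le _) (by omega)]
        simp
      · rw [if_neg (by omega), if_neg (by omega), if_neg (show ¬ n < k + j + 1 by omega),
          if_neg (show ¬ n = k + j + 1 by omega), subst, if_neg (by omega), if_neg (by omega)]
  | pi A B ihA ihB =>
    simp only [subst, Term.pi.injEq, Term.sigma.injEq, Term.lam.injEq, Term.app.injEq, Term.pair.injEq, Term.proj1.injEq, Term.proj2.injEq]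
    exact ⟨ihA j, by exact ihB (j+1)⟩
  | sigma A B ihA ihB =>
    simp only [subst, Term.pi.injEq, Term.sigma.injEq, Term.lam.injEq, Term.app.injEq, Term.pair.injEq, Term.proj1.injEq, Term.proj2.injEq]
    exact ⟨ihA j, by exact ihB (j+1)⟩
  | lam A M ihA ihM =>
    simp only [subst, Term.pi.injEq, Term.sigma.injEq, Term.lam.injEq, Term.app.injEq, Term.pair.injEq, Term.proj1.injEq, Term.proj2.injEq]
    exact ⟨ihA j, by exact ihM (j+1)⟩
  | app M N ihM ihN => simp only [subst, Term.pi.injEq, Term.sigma.injEq, Term.lam.injEq, Term.app.injEq, Term.pair.injEq, Term.proj1.injEq, Term.proj2.injEq]; exact ⟨ihM j, ihN j⟩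
  | pair M N B ihM ihN ihB => simp only [subst, Term.pi.injEq, Term.sigma.injEq, Term.lam.injEq, Term.app.injEq, Term.pair.injEq, Term.proj1.injEq, Term.proj2.injEq]; exact ⟨ihM j, ihN j, ihB j⟩
  | proj1 M ih => simp only [subst, Term.pi.injEq, Term.sigma.injEq, Term.lam.injEq, Term.app.injEq, Term.pair.injEq, Term.proj1.injEq, Term.proj2.injEq]; exact ih j
  | proj2 M ih => simp only [subst, Term.pi.injEq, Term.sigma.injEq, Term.lam.injEq, Term.app.injEq, Term.pair.injEq, Term.proj1.injEq, Term.proj2.injEq]; exact ih j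
  | _ => simp only [subst]

/-! ### Parallel reduction and Church–Rosser -/

/-- Parallel (simultaneous) reduction. -/
inductive Par : Term → Term → Prop
  | var   : Par (.var n) (.var n)
  | prop  : Par .prop .prop
  | type  : Par (.type j) (.type j)
  | pi    : Par A A' → Par B B' → Par (.pi A B) (.pi A' B')
  | sigma : Par A A' → Par B B' → Par (.sigma A B) (.sigma A' B')
  | lam   : Par A A' → Par M M' → Par (.lam A M) (.lam A' M')
  | app   : Par M M' → Par N N' → Par (.app M N) (.app M' N')
  | pair  : Par M M' → Par N N' → Par B B' → Par (.pair M N B) (.pair M' N' B')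
  | proj1 : Par M M' → Par (.proj1 M) (.proj1 M')
  | proj2 : Par M M' → Par (.proj2 M) (.proj2 M')
  | beta  : Par M M' → Par N N' → Par (.app (.lam A M) N) (subst0 M' N')
  | pr1   : Par M M' → Par (.proj1 (.pair M N B)) M'
  | pr2   : Par N N' → Par (.proj2 (.pair M N B)) N'

theorem Par.rfl : ∀ t, Par t t := by
  intro t; induction t <;> constructor <;> assumption

theorem Par.lift_par {t t' : Term} (h : Par t t') :
    ∀ d k, Par (lift d k t) (lift d k t') := by
  induction h with
  | var => intro d k; simp only [lift]; split <;> exact Par.rfl _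
  | prop => intro d k; exact Par.prop
  | type => intro d k; exact Par.type
  | pi _ _ ih1 ih2 => intro d k; exact Par.pi (ih1 d k) (ih2 d (k+1))
  | sigma _ _ ih1 ih2 => intro d k; exact Par.sigma (ih1 d k) (ih2 d (k+1))
  | lam _ _ ih1 ih2 => intro d k; exact Par.lam (ih1 d k) (ih2 d (k+1))
  | app _ _ ih1 ih2 => intro d k; exact Par.app (ih1 d k) (ih2 d k)
  | pair _ _ _ ih1 ih2 ih3 => intro d k; exact Par.pair (ih1 d k) (ih2 d k) (ih3 d k)
  | proj1 _ ih => intro d k; exact Par.proj1 (ih d k)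
  | proj2 _ ih => intro d k; exact Par.proj2 (ih d k)
  | @beta M M' N N' A _ _ ih1 ih2 =>
    intro d k
    have : lift d k (subst0 M' N') = subst0 (lift d (k+1) M') (lift d k N') := by
      have := lift_subst_high d k 0 N' M'
      simpa [subst0] using this
    rw [this]
    exact Par.beta (ih1 d (k+1)) (ih2 d k)
  | pr1 _ ih => intro d k; exact Par.pr1 (ih d k)
  | pr2 _ ih => intro d k; exact Par.pr2 (ih d k)

theorem Par.subst_par {t t' N N' : Term} (h : Par t t') (hN : Par N N') :
    ∀ k, Par (subst N k t) (subst N' k t') := by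
  induction h with
  | @var n =>
    intro k
    simp only [subst]
    by_cases h1 : n < k
    · rw [if_pos h1, if_pos h1]; exact Par.var
    · by_cases h2 : n = k
      · rw [if_neg h1, if_neg h1, if_pos h2, if_pos h2]; exact hN.lift_par k 0
      · rw [if_neg h1, if_neg h1, if_neg h2, if_neg h2]; exact Par.var
  | prop => intro k; exact Par.prop
  | type => intro k; exact Par.type
  | pi _ _ ih1 ih2 => intro k; exact Par.pi (ih1 k) (ih2 (k+1))
  | sigma _ _ ih1 ih2 => intro k; exact Par.sigma (ih1 k) (ih2 (k+1))
  | lam _ _ ih1 ih2 => intro k; exact Par.lam (ih1 k) (ih2 (k+1))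
  | app _ _ ih1 ih2 => intro k; exact Par.app (ih1 k) (ih2 k)
  | pair _ _ _ ih1 ih2 ih3 => intro k; exact Par.pair (ih1 k) (ih2 k) (ih3 k)
  | proj1 _ ih => intro k; exact Par.proj1 (ih k)
  | proj2 _ ih => intro k; exact Par.proj2 (ih k)
  | @beta M M' P P' A _ _ ih1 ih2 =>
    intro k
    have : subst N' k (subst0 M' P') = subst0 (subst N' (k+1) M') (subst N' k P') := by
      have := subst_subst k 0 N' P' M'
      simpa [subst0] using this
    rw [this]
    exact Par.beta (ih1 (k+1)) (ih2 k)
  | pr1 _ ih => intro k; exact Par.pr1 (ih k)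
  | pr2 _ ih => intro k; exact Par.pr2 (ih k)

/-- Complete development. -/
def cd : Term → Term
  | .app (.lam _ M) N => subst0 (cd M) (cd N)
  | .proj1 (.pair M _ _) => cd M
  | .proj2 (.pair _ N _) => cd N
  | .var n => .var n
  | .prop => .prop
  | .type j => .type j
  | .pi A B => .pi (cd A) (cd B)
  | .sigma A B => .sigma (cd A) (cd B)
  | .lam A M => .lam (cd A) (cd M)
  | .app M N => .app (cd M) (cd N)
  | .pair M N B => .pair (cd M) (cd N) (cd B)
  | .proj1 M => .proj1 (cd M)
  | .proj2 M => .proj2 (cd M)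

theorem par_lam_inv {A M u : Term} (h : Par (.lam A M) u) :
    ∃ A' M', u = .lam A' M' ∧ Par A A' ∧ Par M M' := by
  cases h with
  | lam h1 h2 => exact ⟨_, _, rfl, h1, h2⟩

theorem par_pair_inv {M N B u : Term} (h : Par (.pair M N B) u) :
    ∃ M' N' B', u = .pair M' N' B' ∧ Par M M' ∧ Par N N' ∧ Par B B' := by
  cases h with
  | pair h1 h2 h3 => exact ⟨_, _, _, rfl, h1, h2, h3⟩

theorem par_cd {t u : Term} (h : Par t u) : Par u (cd t) := by
  induction h with
  | var => exact Par.var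
  | prop => exact Par.prop
  | type => exact Par.type
  | pi _ _ ih1 ih2 => exact Par.pi ih1 ih2
  | sigma _ _ ih1 ih2 => exact Par.sigma ih1 ih2
  | lam _ _ ih1 ih2 => exact Par.lam ih1 ih2
  | @app M M' N N' hM hN ihM ihN =>
    cases M with
    | lam A P =>
      obtain ⟨A', P', rfl, _, _⟩ := par_lam_inv hM
      obtain ⟨A'', P'', heq, hA2, hP2⟩ := par_lam_inv ihM
      cases heq
      exact Par.beta hP2 ihN
    | var n => exact Par.app ihM ihN
    | prop => exact Par.app ihM ihN
    | type j => exact Par.app ihM ihN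
    | pi A B => exact Par.app ihM ihN
    | sigma A B => exact Par.app ihM ihN
    | app P Q => exact Par.app ihM ihN
    | pair P Q B => exact Par.app ihM ihN
    | proj1 P => exact Par.app ihM ihN
    | proj2 P => exact Par.app ihM ihN
  | pair _ _ _ ih1 ih2 ih3 => exact Par.pair ih1 ih2 ih3
  | @proj1 M M' hM ihM =>
    cases M with
    | pair P Q B =>
      obtain ⟨P', Q', B', rfl, _, _, _⟩ := par_pair_inv hM
      obtain ⟨P'', Q'', B'', heq, hP2, hQ2, hB2⟩ := par_pair_inv ihM
      cases heq
      exact Par.pr1 hP2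
    | var n => exact Par.proj1 ihM
    | prop => exact Par.proj1 ihM
    | type j => exact Par.proj1 ihM
    | pi A B => exact Par.proj1 ihM
    | sigma A B => exact Par.proj1 ihM
    | lam A P => exact Par.proj1 ihM
    | app P Q => exact Par.proj1 ihM
    | proj1 P => exact Par.proj1 ihM
    | proj2 P => exact Par.proj1 ihM
  | @proj2 M M' hM ihM =>
    cases M with
    | pair P Q B =>
      obtain ⟨P', Q', B', rfl, _, _, _⟩ := par_pair_inv hM
      obtain ⟨P'', Q'', B'', heq, hP2, hQ2, hB2⟩ := par_pair_inv ihM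
      cases heq
      exact Par.pr2 hQ2
    | var n => exact Par.proj2 ihM
    | prop => exact Par.proj2 ihM
    | type j => exact Par.proj2 ihM
    | pi A B => exact Par.proj2 ihM
    | sigma A B => exact Par.proj2 ihM
    | lam A P => exact Par.proj2 ihM
    | app P Q => exact Par.proj2 ihM
    | proj1 P => exact Par.proj2 ihM
    | proj2 P => exact Par.proj2 ihM
  | beta _ _ ih1 ih2 => exact Par.subst_par ih1 ih2 0
  | pr1 _ ih => exact ih
  | pr2 _ ih => exact ih

theorem par_diamond {t u v : Term} (h1 : Par t u) (h2 : Par t v) :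
    ∃ w, Par u w ∧ Par v w :=
  ⟨cd t, par_cd h1, par_cd h2⟩

theorem red_par {a b : Term} (h : Red a b) : Par a b := by
  induction h with
  | beta => exact Par.beta (Par.rfl _) (Par.rfl _)
  | pr1 => exact Par.pr1 (Par.rfl _)
  | pr2 => exact Par.pr2 (Par.rfl _)
  | piL _ ih => exact Par.pi ih (Par.rfl _)
  | piR _ ih => exact Par.pi (Par.rfl _) ih
  | sigmaL _ ih => exact Par.sigma ih (Par.rfl _)
  | sigmaR _ ih => exact Par.sigma (Par.rfl _) ih
  | lamL _ ih => exact Par.lam ih (Par.rfl _)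
  | lamR _ ih => exact Par.lam (Par.rfl _) ih
  | appL _ ih => exact Par.app ih (Par.rfl _)
  | appR _ ih => exact Par.app (Par.rfl _) ih
  | pairL _ ih => exact Par.pair ih (Par.rfl _) (Par.rfl _)
  | pairR _ ih => exact Par.pair (Par.rfl _) ih (Par.rfl _)
  | pairB _ ih => exact Par.pair (Par.rfl _) (Par.rfl _) ih
  | proj1C _ ih => exact Par.proj1 ih
  | proj2C _ ih => exact Par.proj2 ih

abbrev Reds := Relation.ReflTransGen Red

theorem reds_congr {f : Term → Term} (hf : ∀ a b, Red a b → Red (f a) (f b))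
    {a b : Term} (h : Reds a b) : Reds (f a) (f b) :=
  Relation.ReflTransGen.lift f hf _ _ h

theorem reds_pi {A A' B B' : Term} (h1 : Reds A A') (h2 : Reds B B') :
    Reds (.pi A B) (.pi A' B') :=
  (reds_congr (fun _ _ h => Red.piL h) h1).trans
    (reds_congr (fun _ _ h => Red.piR h) h2)

theorem reds_sigma {A A' B B' : Term} (h1 : Reds A A') (h2 : Reds B B') :
    Reds (.sigma A B) (.sigma A' B') :=
  (reds_congr (fun _ _ h => Red.sigmaL h) h1).trans
    (reds_congr (fun _ _ h => Red.sigmaR h) h2)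

theorem reds_lam {A A' M M' : Term} (h1 : Reds A A') (h2 : Reds M M') :
    Reds (.lam A M) (.lam A' M') :=
  (reds_congr (fun _ _ h => Red.lamL h) h1).trans
    (reds_congr (fun _ _ h => Red.lamR h) h2)

theorem reds_app {M M' N N' : Term} (h1 : Reds M M') (h2 : Reds N N') :
    Reds (.app M N) (.app M' N') :=
  (reds_congr (fun _ _ h => Red.appL h) h1).trans
    (reds_congr (fun _ _ h => Red.appR h) h2)

theorem reds_pair {M M' N N' B B' : Term} (h1 : Reds M M') (h2 : Reds N N')
    (h3 : Reds B B') : Reds (.pair M N B) (.pair M' N' B') :=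
  ((reds_congr (fun _ _ h => Red.pairL h) h1).trans
    (reds_congr (fun _ _ h => Red.pairR h) h2)).trans
    (reds_congr (fun _ _ h => Red.pairB h) h3)

theorem par_reds {a b : Term} (h : Par a b) : Reds a b := by
  induction h with
  | var => exact Relation.ReflTransGen.refl
  | prop => exact Relation.ReflTransGen.refl
  | type => exact Relation.ReflTransGen.refl
  | pi _ _ ih1 ih2 => exact reds_pi ih1 ih2
  | sigma _ _ ih1 ih2 => exact reds_sigma ih1 ih2
  | lam _ _ ih1 ih2 => exact reds_lam ih1 ih2
  | app _ _ ih1 ih2 => exact reds_app ih1 ih2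
  | pair _ _ _ ih1 ih2 ih3 => exact reds_pair ih1 ih2 ih3
  | proj1 _ ih => exact reds_congr (fun _ _ h => Red.proj1C h) ih
  | proj2 _ ih => exact reds_congr (fun _ _ h => Red.proj2C h) ih
  | @beta M M' N N' A _ _ ih1 ih2 =>
    exact (reds_app (reds_lam Relation.ReflTransGen.refl ih1) ih2).trans
      (Relation.ReflTransGen.single Red.beta)
  | pr1 _ ih => exact Relation.ReflTransGen.head Red.pr1 ih
  | pr2 _ ih => exact Relation.ReflTransGen.head Red.pr2 ih

theorem reds_eq_pars : Relation.ReflTransGen Par = Reds := by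
  ext a b
  constructor
  · intro h
    induction h with
    | refl => exact Relation.ReflTransGen.refl
    | tail _ h2 ih => exact ih.trans (par_reds h2)
  · intro h
    exact Relation.ReflTransGen.mono (fun _ _ h => red_par h) _ _ h

/-- Church–Rosser. -/
theorem conv_join {M N : Term} (h : Conv M N) : ∃ Z, Reds M Z ∧ Reds N Z := by
  have cr : ∀ a b c : Term, Par a b → Par a c →
      ∃ d, Relation.ReflGen Par b d ∧ Relation.ReflTransGen Par c d := by
    intro a b c h1 h2
    obtain ⟨w, hw1, hw2⟩ := par_diamond h1 h2
    exact ⟨w, Relation.ReflGen.single hw1, Relation.ReflTransGen.single hw2⟩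
  have equiv := Relation.equivalence_join_reflTransGen cr
  have key : Relation.Join (Relation.ReflTransGen Par) M N := by
    induction h with
    | rel a b hab => exact ⟨b, Relation.ReflTransGen.single (red_par hab), .refl⟩
    | refl a => exact equiv.refl a
    | symm a b _ ih => exact equiv.symm ih
    | trans a b c _ _ ih1 ih2 => exact equiv.trans ih1 ih2
  obtain ⟨Z, h1, h2⟩ := key
  rw [reds_eq_pars] at h1 h2
  exact ⟨Z, h1, h2⟩

theorem reds_conv {a b : Term} (h : Reds a b) : Conv a b := by
  induction h with
  | refl => exact Relation.EqvGen.refl _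
  | tail _ h2 ih => exact Relation.EqvGen.trans _ _ _ ih (Relation.EqvGen.rel _ _ h2)

theorem reds_pi_inv {A B T : Term} (h : Reds (.pi A B) T) :
    ∃ A' B', T = .pi A' B' ∧ Reds A A' ∧ Reds B B' := by
  induction h with
  | refl => exact ⟨A, B, rfl, .refl, .refl⟩
  | tail _ h2 ih =>
    obtain ⟨A', B', rfl, hA, hB⟩ := ih
    cases h2 with
    | piL h => exact ⟨_, _, rfl, hA.tail h, hB⟩
    | piR h => exact ⟨_, _, rfl, hA, hB.tail h⟩

theorem reds_sigma_inv {A B T : Term} (h : Reds (.sigma A B) T) :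
    ∃ A' B', T = .sigma A' B' ∧ Reds A A' ∧ Reds B B' := by
  induction h with
  | refl => exact ⟨A, B, rfl, .refl, .refl⟩
  | tail _ h2 ih =>
    obtain ⟨A', B', rfl, hA, hB⟩ := ih
    cases h2 with
    | sigmaL h => exact ⟨_, _, rfl, hA.tail h, hB⟩
    | sigmaR h => exact ⟨_, _, rfl, hA, hB.tail h⟩

theorem not_conv_pi_sigma {A B C D : Term} (h : Conv (.pi A B) (.sigma C D)) : False := by
  obtain ⟨Z, h1, h2⟩ := conv_join h
  obtain ⟨A', B', rfl, -, -⟩ := reds_pi_inv h1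
  obtain ⟨C', D', hZ, -, -⟩ := reds_sigma_inv h2
  exact Term.noConfusion hZ

theorem conv_pi_pi {A B A' B' : Term} (h : Conv (.pi A B) (.pi A' B')) :
    Conv A A' ∧ Conv B B' := by
  obtain ⟨Z, h1, h2⟩ := conv_join h
  obtain ⟨A0, B0, rfl, hA, hB⟩ := reds_pi_inv h1
  obtain ⟨A1, B1, hZ, hA', hB'⟩ := reds_pi_inv h2
  cases hZ
  exact ⟨Relation.EqvGen.trans _ _ _ (reds_conv hA)
      (Relation.EqvGen.symm _ _ (reds_conv hA')),
    Relation.EqvGen.trans _ _ _ (reds_conv hB)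
      (Relation.EqvGen.symm _ _ (reds_conv hB'))⟩

theorem conv_sigma_sigma {A B A' B' : Term} (h : Conv (.sigma A B) (.sigma A' B')) :
    Conv A A' ∧ Conv B B' := by
  obtain ⟨Z, h1, h2⟩ := conv_join h
  obtain ⟨A0, B0, rfl, hA, hB⟩ := reds_sigma_inv h1
  obtain ⟨A1, B1, hZ, hA', hB'⟩ := reds_sigma_inv h2
  cases hZ
  exact ⟨Relation.EqvGen.trans _ _ _ (reds_conv hA)
      (Relation.EqvGen.symm _ _ (reds_conv hA')),
    Relation.EqvGen.trans _ _ _ (reds_conv hB)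
      (Relation.EqvGen.symm _ _ (reds_conv hB'))⟩

/-! ### Strata -/

theorem strata_zero : Strata 0 = (Base, Base) := by rw [Strata]

theorem piStr_succ_elim {T : Term} {n : ℕ} (h : T ∈ PiStr (n+1)) :
    ∃ k l, k + l = n ∧ ∃ A B, HasNF (.pi A B) ∧ Conv T (.pi A B) ∧
      A ∈ PiStr k ∪ SigStr k ∧ B ∈ PiStr l ∪ SigStr l := by
  rw [PiStr, Strata] at h
  obtain ⟨k, l, hkl, A, B, h1, h2, h3, h4⟩ := h
  exact ⟨k, l, hkl, A, B, h1, h2, h3, h4⟩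

theorem sigStr_succ_elim {T : Term} {n : ℕ} (h : T ∈ SigStr (n+1)) :
    ∃ k l, k + l = n ∧ ∃ A B, HasNF (.sigma A B) ∧ Conv T (.sigma A B) ∧
      A ∈ PiStr k ∪ SigStr k ∧ B ∈ PiStr l ∪ SigStr l := by
  rw [SigStr, Strata] at h
  obtain ⟨k, l, hkl, A, B, h1, h2, h3, h4⟩ := h
  exact ⟨k, l, hkl, A, B, h1, h2, h3, h4⟩

theorem mem_base_of_zero {T : Term} (h : T ∈ PiStr 0 ∪ SigStr 0) : T ∈ Base := by
  rcases h with h | h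
  · rw [PiStr, strata_zero] at h; exact h
  · rw [SigStr, strata_zero] at h; exact h

private theorem ctrans {a b c : Term} (h1 : Conv a b) (h2 : Conv b c) : Conv a c :=
  Relation.EqvGen.trans _ _ _ h1 h2

private theorem csymm {a b : Term} (h : Conv a b) : Conv b a :=
  Relation.EqvGen.symm _ _ h

theorem strata_sep : ∀ s i j (M N : Term), i + j ≤ s →
    M ∈ PiStr i ∪ SigStr i → N ∈ PiStr j ∪ SigStr j → Conv M N → i = j := by
  intro s
  induction s with
  | zero => intro i j M N hle _ _ _; omega
  | succ s ih =>
    intro i j M N hle hM hN hMN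
    have headN : ∀ p (N M : Term), N ∈ PiStr (p+1) ∪ SigStr (p+1) → Conv M N →
        M ∈ Base → False := by
      intro p N M hN hMN hbase
      rcases hN with h | h
      · obtain ⟨k, l, hkl, A, B, h1, h2, -, -⟩ := piStr_succ_elim h
        exact hbase.2 ⟨.pi A B, h1, trivial, ctrans hMN h2⟩
      · obtain ⟨k, l, hkl, A, B, h1, h2, -, -⟩ := sigStr_succ_elim h
        exact hbase.2 ⟨.sigma A B, h1, trivial, ctrans hMN h2⟩
    match i, j with
    | 0, 0 => rfl
    | 0, j+1 => exact absurd (headN j N M hN hMN (mem_base_of_zero hM)) id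
    | i+1, 0 => exact absurd (headN i M N hM (csymm hMN) (mem_base_of_zero hN)) id
    | i+1, j+1 =>
      rcases hM with hM | hM
      · obtain ⟨k, l, hkl, A, B, -, h2, h3, h4⟩ := piStr_succ_elim hM
        rcases hN with hN | hN
        · obtain ⟨k', l', hkl', A', B', -, h2', h3', h4'⟩ := piStr_succ_elim hN
          have hc : Conv (.pi A B) (.pi A' B') := ctrans (csymm h2) (ctrans hMN h2')
          obtain ⟨cA, cB⟩ := conv_pi_pi hc
          have e1 := ih k k' A A' (by omega) h3 h3' cA
          have e2 := ih l l' B B' (by omega) h4 h4' cB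
          omega
        · obtain ⟨k', l', hkl', A', B', -, h2', h3', h4'⟩ := sigStr_succ_elim hN
          exact absurd (ctrans (csymm h2) (ctrans hMN h2')) (fun h => not_conv_pi_sigma h)
      · obtain ⟨k, l, hkl, A, B, -, h2, h3, h4⟩ := sigStr_succ_elim hM
        rcases hN with hN | hN
        · obtain ⟨k', l', hkl', A', B', -, h2', h3', h4'⟩ := piStr_succ_elim hN
          exact absurd (ctrans (csymm h2') (ctrans (csymm hMN) h2))
            (fun h => not_conv_pi_sigma h)
        · obtain ⟨k', l', hkl', A', B', -, h2', h3', h4'⟩ := sigStr_succ_elim hN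
          have hc : Conv (.sigma A B) (.sigma A' B') := ctrans (csymm h2) (ctrans hMN h2')
          obtain ⟨cA, cB⟩ := conv_sigma_sigma hc
          have e1 := ih k k' A A' (by omega) h3 h3' cA
          have e2 := ih l l' B B' (by omega) h4 h4' cB
          omega

end ECC

/-- the strata `Π_n` and `Σ_n` are disjoint for `n ≥ 1`, and the
Π-strata (resp. Σ-strata) separate conversion classes. -/
theorem strata_disjoint_and_separate_conversion :
    (∀ n : ℕ, 1 ≤ n → ECC.PiStr n ∩ ECC.SigStr n = ∅) ∧
    (∀ (i j : ℕ) (M N : ECC.Term),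
      M ∈ ECC.PiStr i → N ∈ ECC.PiStr j → ECC.Conv M N → i = j) ∧
    (∀ (i j : ℕ) (M N : ECC.Term),
      M ∈ ECC.SigStr i → N ∈ ECC.SigStr j → ECC.Conv M N → i = j) := by
  refine ⟨?_, ?_, ?_⟩
  · rintro ⟨⟩ hn
    · omega
    rename_i m
    apply Set.eq_empty_iff_forall_notMem.2
    rintro T ⟨hT1, hT2⟩
    obtain ⟨k, l, -, A, B, -, h2, -, -⟩ := ECC.piStr_succ_elim hT1
    obtain ⟨k', l', -, A', B', -, h2', -, -⟩ := ECC.sigStr_succ_elim hT2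
    exact ECC.not_conv_pi_sigma (Relation.EqvGen.trans _ _ _
      (Relation.EqvGen.symm _ _ h2) h2')
  · intro i j M N hM hN hMN
    exact ECC.strata_sep (i + j) i j M N le_rfl (Or.inl hM) (Or.inl hN) hMN
  · intro i j M N hM hN hMN
    exact ECC.strata_sep (i + j) i j M N le_rfl (Or.inr hM) (Or.inr hN) hMN
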